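/- arXiv:2601.03576 — 2 statements merged into one kernel-verified Lean document; each statement's English description precedes it below -/
import Mathlib

section
/- Under the frame setup on ℝ_t × ℝ²_x, suppose additionally that φ : ℝ × ℝ² → ℝ is C¹, κ ∈ ℝ, and that S satisfies the Ishimori evolution equation pointwise: ∂_t S = S × (∂₁² S − ∂₂² S) + κ ( ∂₁φ · ∂₁ S + ∂₂φ · ∂₂ S ). Then pointwise ψ_t = i ( D₁ ψ₁ − D₂ ψ₂ ) + κ ( ψ₁ ∂₁φ + ψ₂ ∂₂φ ). -/
open Matrix

/-- The time direction in `ℝ_t × ℝ²_x`. -/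
def et : ℝ × ℝ × ℝ := (1, 0, 0)
/-- The first spatial direction in `ℝ_t × ℝ²_x`. -/
def e1 : ℝ × ℝ × ℝ := (0, 1, 0)
/-- The second spatial direction in `ℝ_t × ℝ²_x`. -/
def e2 : ℝ × ℝ × ℝ := (0, 0, 1)

/-- Partial derivative of `f` in direction `e`. -/
noncomputable def pd3 {E : Type*} [NormedAddCommGroup E] [NormedSpace ℝ E]
    (f : ℝ × ℝ × ℝ → E) (e : ℝ × ℝ × ℝ) (p : ℝ × ℝ × ℝ) : E :=
  fderiv ℝ f p e

/-- The complexified differentiated field `ψ_α = ⟨v, ∂_α S⟩ + i ⟨w, ∂_α S⟩`. -/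
noncomputable def framePsi (S v w : ℝ × ℝ × ℝ → Fin 3 → ℝ) (e p : ℝ × ℝ × ℝ) : ℂ :=
  ((v p ⬝ᵥ pd3 S e p : ℝ) : ℂ) + Complex.I * ((w p ⬝ᵥ pd3 S e p : ℝ) : ℂ)

/-- The real connection coefficient `A_α = ⟨w, ∂_α v⟩`. -/
noncomputable def frameA (v w : ℝ × ℝ × ℝ → Fin 3 → ℝ) (e p : ℝ × ℝ × ℝ) : ℝ :=
  w p ⬝ᵥ pd3 v e p

/-- The covariant derivative `D_α f = ∂_α f + i A_α f`. -/
noncomputable def Dcov (A : ℝ × ℝ × ℝ → ℝ) (f : ℝ × ℝ × ℝ → ℂ) (e p : ℝ × ℝ × ℝ) : ℂ :=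
  fderiv ℝ f p e + Complex.I * (A p : ℂ) * f p

section Helpers

lemma hasFDerivAt_comp3 {E : Type*} [NormedAddCommGroup E] [NormedSpace ℝ E]
    (f : E → Fin 3 → ℝ) {p : E} (hf : DifferentiableAt ℝ f p) (i : Fin 3) :
    HasFDerivAt (fun q => f q i) ((ContinuousLinearMap.proj i).comp (fderiv ℝ f p)) p :=
  ((ContinuousLinearMap.proj i).hasFDerivAt.comp p hf.hasFDerivAt : )

lemma hasFDerivAt_dot3 {E : Type*} [NormedAddCommGroup E] [NormedSpace ℝ E]
    {f g : E → Fin 3 → ℝ} {p : E} (hf : DifferentiableAt ℝ f p) (hg : DifferentiableAt ℝ g p) :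
    HasFDerivAt (fun q => f q ⬝ᵥ g q)
      (∑ i : Fin 3, (f p i • (ContinuousLinearMap.proj i).comp (fderiv ℝ g p)
        + g p i • (ContinuousLinearMap.proj i).comp (fderiv ℝ f p))) p := by
  simp only [dotProduct]
  exact HasFDerivAt.fun_sum fun i _ => (hasFDerivAt_comp3 f hf i).mul (hasFDerivAt_comp3 g hg i)

lemma fderiv_dot3 {E : Type*} [NormedAddCommGroup E] [NormedSpace ℝ E]
    {f g : E → Fin 3 → ℝ} {p : E} (hf : DifferentiableAt ℝ f p) (hg : DifferentiableAt ℝ g p)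
    (e : E) :
    fderiv ℝ (fun q => f q ⬝ᵥ g q) p e = fderiv ℝ f p e ⬝ᵥ g p + f p ⬝ᵥ fderiv ℝ g p e := by
  rw [(hasFDerivAt_dot3 hf hg).fderiv]
  simp [dotProduct, Fin.sum_univ_three]
  ring

lemma diffAt_dot3 {E : Type*} [NormedAddCommGroup E] [NormedSpace ℝ E]
    {f g : E → Fin 3 → ℝ} {p : E} (hf : DifferentiableAt ℝ f p) (hg : DifferentiableAt ℝ g p) :
    DifferentiableAt ℝ (fun q => f q ⬝ᵥ g q) p :=
  (hasFDerivAt_dot3 hf hg).differentiableAt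

lemma diffAt_cross3 {E : Type*} [NormedAddCommGroup E] [NormedSpace ℝ E]
    {f g : E → Fin 3 → ℝ} {p : E} (hf : DifferentiableAt ℝ f p) (hg : DifferentiableAt ℝ g p) :
    DifferentiableAt ℝ (fun q => f q ⨯₃ g q) p := by
  apply differentiableAt_pi.2
  intro i
  have hfc : ∀ j : Fin 3, DifferentiableAt ℝ (fun q => f q j) p :=
    fun j => (hasFDerivAt_comp3 f hf j).differentiableAt
  have hgc : ∀ j : Fin 3, DifferentiableAt ℝ (fun q => g q j) p :=
    fun j => (hasFDerivAt_comp3 g hg j).differentiableAt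
  fin_cases i <;> simp only [cross_apply, Matrix.cons_val_zero, Matrix.cons_val_one,
    Matrix.head_cons, Matrix.cons_val_two, Matrix.tail_cons] <;>
    exact ((hfc _).mul (hgc _)).sub ((hfc _).mul (hgc _))

lemma fderiv_comp3 {E : Type*} [NormedAddCommGroup E] [NormedSpace ℝ E]
    {f : E → Fin 3 → ℝ} {p : E} (hf : DifferentiableAt ℝ f p) (i : Fin 3) (e : E) :
    fderiv ℝ (fun q => f q i) p e = fderiv ℝ f p e i := by
  rw [(hasFDerivAt_comp3 f hf i).fderiv]; rfl

lemma fderiv_cross3 {E : Type*} [NormedAddCommGroup E] [NormedSpace ℝ E]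
    {f g : E → Fin 3 → ℝ} {p : E} (hf : DifferentiableAt ℝ f p) (hg : DifferentiableAt ℝ g p)
    (e : E) :
    fderiv ℝ (fun q => f q ⨯₃ g q) p e
      = (fderiv ℝ f p e) ⨯₃ g p + f p ⨯₃ (fderiv ℝ g p e) := by
  have hfc := fun j => (hasFDerivAt_comp3 f hf j)
  have hgc := fun j => (hasFDerivAt_comp3 g hg j)
  funext i
  rw [← fderiv_comp3 (diffAt_cross3 hf hg) i e]
  fin_cases i <;>
    simp only [Fin.zero_eta, Fin.mk_one, Fin.reduceFinMk, cross_apply, Matrix.cons_val_zero,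
      Matrix.cons_val_one, Matrix.head_cons, Matrix.cons_val_two, Matrix.tail_cons,
      Pi.add_apply] <;>
  · rw [(((hfc _).fun_mul (hgc _)).fun_sub ((hfc _).fun_mul (hgc _))).fderiv]
    simp only [ContinuousLinearMap.coe_sub', Pi.sub_apply, ContinuousLinearMap.add_apply,
      ContinuousLinearMap.coe_smul', Pi.smul_apply, ContinuousLinearMap.coe_comp',
      Function.comp_apply, ContinuousLinearMap.proj_apply, smul_eq_mul]
    ring

lemma cross_cross3 (u v w : Fin 3 → ℝ) :
    (u ⨯₃ v) ⨯₃ w = (u ⬝ᵥ w) • v - (v ⬝ᵥ w) • u := by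
  funext i
  fin_cases i <;> simp [cross_apply, vec3_dotProduct] <;> ring

lemma frame_decomp (s V a : Fin 3 → ℝ) (hs : s ⬝ᵥ s = 1) (hV : V ⬝ᵥ V = 1)
    (hsV : s ⬝ᵥ V = 0) :
    a = (s ⬝ᵥ a) • s + (V ⬝ᵥ a) • V + ((s ⨯₃ V) ⬝ᵥ a) • (s ⨯₃ V) := by
  have h1 : (s ⨯₃ V) ⨯₃ a = (s ⬝ᵥ a) • V - (V ⬝ᵥ a) • s := cross_cross3 s V a
  have h2 : ((s ⨯₃ V) ⨯₃ a) ⨯₃ (s ⨯₃ V)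
      = ((s ⨯₃ V) ⬝ᵥ (s ⨯₃ V)) • a - (a ⬝ᵥ (s ⨯₃ V)) • (s ⨯₃ V) :=
    cross_cross3 (s ⨯₃ V) a (s ⨯₃ V)
  have hWW : (s ⨯₃ V) ⬝ᵥ (s ⨯₃ V) = 1 := by
    rw [cross_dot_cross, hs, hV, dotProduct_comm V s, hsV]; ring
  have hVs : V ⬝ᵥ s = 0 := by rw [dotProduct_comm]; exact hsV
  have haW : a ⬝ᵥ (s ⨯₃ V) = (s ⨯₃ V) ⬝ᵥ a := dotProduct_comm _ _
  rw [h1, hWW, haW, one_smul] at h2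
  have h3 : ((s ⬝ᵥ a) • V - (V ⬝ᵥ a) • s) ⨯₃ (s ⨯₃ V)
      = (s ⬝ᵥ a) • (V ⨯₃ (s ⨯₃ V)) - (V ⬝ᵥ a) • (s ⨯₃ (s ⨯₃ V)) := by
    simp [LinearMap.map_sub, LinearMap.map_smul, LinearMap.sub_apply, LinearMap.smul_apply]
  have h4 : V ⨯₃ (s ⨯₃ V) = s := by
    rw [← cross_anticomm (s ⨯₃ V) V, cross_cross3, hsV, hV]; simp
  have h5 : s ⨯₃ (s ⨯₃ V) = -V := by
    rw [← cross_anticomm (s ⨯₃ V) s, cross_cross3, hs, hVs]; simp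
  rw [h3, h4, h5] at h2
  funext i
  have h := congrFun h2 i
  simp only [Pi.add_apply, Pi.sub_apply, Pi.smul_apply, Pi.neg_apply, smul_eq_mul] at h ⊢
  linarith

lemma parseval3 (s V a b : Fin 3 → ℝ) (hs : s ⬝ᵥ s = 1) (hV : V ⬝ᵥ V = 1)
    (hsV : s ⬝ᵥ V = 0) :
    a ⬝ᵥ b = (s ⬝ᵥ a) * (s ⬝ᵥ b) + (V ⬝ᵥ a) * (V ⬝ᵥ b)
      + ((s ⨯₃ V) ⬝ᵥ a) * ((s ⨯₃ V) ⬝ᵥ b) := by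
  conv_lhs => rw [frame_decomp s V a hs hV hsV]
  simp [add_dotProduct, smul_dotProduct, smul_eq_mul]

lemma dot_cross_left (V s X : Fin 3 → ℝ) : V ⬝ᵥ (s ⨯₃ X) = -((s ⨯₃ V) ⬝ᵥ X) := by
  simp_rw [cross_apply, vec3_dotProduct]
  norm_num [Matrix.cons_val_two, Matrix.vecHead, Matrix.vecTail]
  ring

/-- Derivative of `framePsi` in a direction. -/
lemma fderiv_framePsi (S v w : ℝ × ℝ × ℝ → Fin 3 → ℝ) (e : ℝ × ℝ × ℝ) {p : ℝ × ℝ × ℝ}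
    (hvd : DifferentiableAt ℝ v p) (hwd : DifferentiableAt ℝ w p)
    (hpd : DifferentiableAt ℝ (pd3 S e) p) (e' : ℝ × ℝ × ℝ) :
    fderiv ℝ (framePsi S v w e) p e' =
      ((fderiv ℝ v p e' ⬝ᵥ pd3 S e p + v p ⬝ᵥ fderiv ℝ (pd3 S e) p e' : ℝ) : ℂ)
        + Complex.I * ((fderiv ℝ w p e' ⬝ᵥ pd3 S e p + w p ⬝ᵥ fderiv ℝ (pd3 S e) p e' : ℝ) : ℂ) := by
  have hr1 : DifferentiableAt ℝ (fun q => v q ⬝ᵥ pd3 S e q) p := diffAt_dot3 hvd hpd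
  have hr2 : DifferentiableAt ℝ (fun q => w q ⬝ᵥ pd3 S e q) p := diffAt_dot3 hwd hpd
  have h1 : HasFDerivAt (fun q => ((v q ⬝ᵥ pd3 S e q : ℝ) : ℂ))
      (Complex.ofRealCLM.comp (fderiv ℝ (fun q => v q ⬝ᵥ pd3 S e q) p)) p :=
    (Complex.ofRealCLM.hasFDerivAt.comp p hr1.hasFDerivAt : )
  have h2 : HasFDerivAt (fun q => Complex.I * ((w q ⬝ᵥ pd3 S e q : ℝ) : ℂ))
      (Complex.I • (Complex.ofRealCLM.comp (fderiv ℝ (fun q => w q ⬝ᵥ pd3 S e q) p))) p :=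
    HasFDerivAt.const_mul ((Complex.ofRealCLM.hasFDerivAt.comp p hr2.hasFDerivAt : )) Complex.I
  have h : HasFDerivAt (framePsi S v w e)
      (Complex.ofRealCLM.comp (fderiv ℝ (fun q => v q ⬝ᵥ pd3 S e q) p)
        + Complex.I • (Complex.ofRealCLM.comp (fderiv ℝ (fun q => w q ⬝ᵥ pd3 S e q) p))) p :=
    h1.add h2
  rw [h.fderiv]
  have k1 := fderiv_dot3 hvd hpd e'
  have k2 := fderiv_dot3 hwd hpd e'
  simp only [ContinuousLinearMap.add_apply, ContinuousLinearMap.coe_smul', Pi.smul_apply,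
    ContinuousLinearMap.coe_comp', Function.comp_apply, Complex.ofRealCLM_apply, smul_eq_mul]
  rw [k1, k2]

/-- `f ⬝ᵥ ∂f = 0` for a unit field. -/
lemma dot_pd3_self (f : ℝ × ℝ × ℝ → Fin 3 → ℝ) (hf : Differentiable ℝ f)
    (hf1 : ∀ p, f p ⬝ᵥ f p = 1) (e p : ℝ × ℝ × ℝ) :
    f p ⬝ᵥ pd3 f e p = 0 := by
  have hconst : (fun q => f q ⬝ᵥ f q) = fun _ => (1 : ℝ) := funext hf1
  have h0 : fderiv ℝ (fun q => f q ⬝ᵥ f q) p e = 0 := by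
    rw [hconst]; simp
  rw [fderiv_dot3 (hf p) (hf p) e] at h0
  rw [dotProduct_comm (fderiv ℝ f p e) (f p)] at h0
  show f p ⬝ᵥ fderiv ℝ f p e = 0
  linarith

end Helpers

/-- For a solution of the Ishimori evolution equation one has
`ψ_t = i (D₁ψ₁ − D₂ψ₂) + κ (ψ₁ ∂₁φ + ψ₂ ∂₂φ)`. -/
theorem psi_t_identity_ishimori
    (S v : ℝ × ℝ × ℝ → Fin 3 → ℝ)
    (hS : ContDiff ℝ 2 S) (hv : ContDiff ℝ 2 v)
    (hS1 : ∀ p, S p ⬝ᵥ S p = 1) (hv1 : ∀ p, v p ⬝ᵥ v p = 1)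
    (hSv : ∀ p, S p ⬝ᵥ v p = 0)
    (w : ℝ × ℝ × ℝ → Fin 3 → ℝ) (hw : ∀ p, w p = crossProduct (S p) (v p))
    (φ : ℝ × ℝ × ℝ → ℝ) (hφ : ContDiff ℝ 1 φ) (κ : ℝ)
    (hIshimori : ∀ p : ℝ × ℝ × ℝ,
      pd3 S et p =
        crossProduct (S p) (pd3 (pd3 S e1) e1 p - pd3 (pd3 S e2) e2 p) +
          κ • ((fderiv ℝ φ p e1) • pd3 S e1 p + (fderiv ℝ φ p e2) • pd3 S e2 p)) :
    ∀ p : ℝ × ℝ × ℝ,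
      framePsi S v w et p =
        Complex.I * (Dcov (frameA v w e1) (framePsi S v w e1) e1 p
            - Dcov (frameA v w e2) (framePsi S v w e2) e2 p)
          + (κ : ℂ) * (framePsi S v w e1 p * ((fderiv ℝ φ p e1 : ℝ) : ℂ)
            + framePsi S v w e2 p * ((fderiv ℝ φ p e2 : ℝ) : ℂ)) := by
  have hw' : w = fun q => S q ⨯₃ v q := funext hw
  subst hw'
  intro p
  have hSd : Differentiable ℝ S := hS.differentiable two_ne_zero
  have hvd : Differentiable ℝ v := hv.differentiable two_ne_zero
  have hpdS : ∀ e, Differentiable ℝ (pd3 S e) := fun e =>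
    ((hS.fderiv_right (m := 1) (le_refl 2)).clm_apply contDiff_const).differentiable one_ne_zero
  have hwd : DifferentiableAt ℝ (fun q => S q ⨯₃ v q) p := diffAt_cross3 (hSd p) (hvd p)
  have hsp := hS1 p
  have hVp := hv1 p
  have hsVp := hSv p
  -- the key computation for a spatial direction
  have main : ∀ e : ℝ × ℝ × ℝ,
      Dcov (frameA v (fun q => S q ⨯₃ v q) e) (framePsi S v (fun q => S q ⨯₃ v q) e) e p
        = ((v p ⬝ᵥ pd3 (pd3 S e) e p : ℝ) : ℂ)
          + Complex.I * (((S p ⨯₃ v p) ⬝ᵥ pd3 (pd3 S e) e p : ℝ) : ℂ) := by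
    intro e
    have hsa : S p ⬝ᵥ pd3 S e p = 0 := dot_pd3_self S hSd hS1 e p
    have hvb : v p ⬝ᵥ pd3 v e p = 0 := dot_pd3_self v hvd hv1 e p
    have hderiv := fderiv_framePsi S v (fun q => S q ⨯₃ v q) e (hvd p) hwd ((hpdS e) p) e
    have hcross := fderiv_cross3 (hSd p) (hvd p) e
    -- scalar identities
    have hba : fderiv ℝ v p e ⬝ᵥ pd3 S e p
        = ((S p ⨯₃ v p) ⬝ᵥ pd3 v e p) * ((S p ⨯₃ v p) ⬝ᵥ pd3 S e p) := by
      have hpar := parseval3 (S p) (v p) (fderiv ℝ v p e) (pd3 S e p) hsp hVp hsVp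
      have hb2 : v p ⬝ᵥ fderiv ℝ v p e = 0 := hvb
      have hb3 : (S p ⨯₃ v p) ⬝ᵥ fderiv ℝ v p e = (S p ⨯₃ v p) ⬝ᵥ pd3 v e p := rfl
      rw [hpar, hsa, hb2, hb3]
      ring
    have hca : (fderiv ℝ S p e ⨯₃ v p + S p ⨯₃ fderiv ℝ v p e) ⬝ᵥ pd3 S e p
        = -(((S p ⨯₃ v p) ⬝ᵥ pd3 v e p) * (v p ⬝ᵥ pd3 S e p)) := by
      rw [add_dotProduct]
      have t1 : (fderiv ℝ S p e ⨯₃ v p) ⬝ᵥ pd3 S e p = 0 := by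
        rw [dotProduct_comm]
        show pd3 S e p ⬝ᵥ (pd3 S e p ⨯₃ v p) = 0
        exact dot_self_cross _ _
      have t2 : (S p ⨯₃ fderiv ℝ v p e) ⬝ᵥ pd3 S e p
          = -(((S p ⨯₃ v p) ⬝ᵥ pd3 v e p) * (v p ⬝ᵥ pd3 S e p)) := by
        rw [dotProduct_comm]
        show pd3 S e p ⬝ᵥ (S p ⨯₃ pd3 v e p) = _
        rw [triple_product_permutation, triple_product_permutation]
        -- now : pd3 v e p ⬝ᵥ (pd3 S e p ⨯₃ S p)
        have := parseval3 (S p) (v p) (pd3 v e p) (pd3 S e p ⨯₃ S p) hsp hVp hsVp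
        rw [this]
        have z1 : S p ⬝ᵥ (pd3 S e p ⨯₃ S p) = 0 := dot_cross_self _ _
        have z3 : (S p ⨯₃ v p) ⬝ᵥ (pd3 S e p ⨯₃ S p)
            = -(v p ⬝ᵥ pd3 S e p) := by
          rw [cross_dot_cross, hsp, dotProduct_comm (v p) (S p), hsVp]
          ring
        rw [z1, hvb, z3]
        ring
      rw [t1, t2]; ring
    have hDcov : Dcov (frameA v (fun q => S q ⨯₃ v q) e)
        (framePsi S v (fun q => S q ⨯₃ v q) e) e p
        = fderiv ℝ (framePsi S v (fun q => S q ⨯₃ v q) e) p e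
          + Complex.I * (((S p ⨯₃ v p) ⬝ᵥ pd3 v e p : ℝ) : ℂ)
            * (((v p ⬝ᵥ pd3 S e p : ℝ) : ℂ)
              + Complex.I * (((S p ⨯₃ v p) ⬝ᵥ pd3 S e p : ℝ) : ℂ)) := rfl
    rw [hDcov, hderiv, hcross, hba, hca]
    set A := (S p ⨯₃ v p) ⬝ᵥ pd3 v e p
    set va := v p ⬝ᵥ pd3 S e p
    set wa := (S p ⨯₃ v p) ⬝ᵥ pd3 S e p
    set vd := v p ⬝ᵥ pd3 (pd3 S e) e p
    set wd := (S p ⨯₃ v p) ⬝ᵥ pd3 (pd3 S e) e p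
    have hvd' : v p ⬝ᵥ fderiv ℝ (pd3 S e) p e = vd := rfl
    have hwd' : (S p ⨯₃ v p) ⬝ᵥ fderiv ℝ (pd3 S e) p e = wd := rfl
    rw [hvd', hwd']
    push_cast
    linear_combination ((A : ℂ) * (wa : ℂ)) * Complex.I_sq
  rw [main e1, main e2]
  -- now handle the left-hand side via the Ishimori equation
  have hIp := hIshimori p
  have hLv : v p ⬝ᵥ pd3 S et p
      = -((S p ⨯₃ v p) ⬝ᵥ (pd3 (pd3 S e1) e1 p - pd3 (pd3 S e2) e2 p))
        + κ * (fderiv ℝ φ p e1 * (v p ⬝ᵥ pd3 S e1 p) + fderiv ℝ φ p e2 * (v p ⬝ᵥ pd3 S e2 p)) := by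
    rw [hIp]
    rw [dotProduct_add, dot_cross_left]
    simp [dotProduct_add, dotProduct_smul, smul_eq_mul]
    ring
  have hLw : (S p ⨯₃ v p) ⬝ᵥ pd3 S et p
      = (v p ⬝ᵥ (pd3 (pd3 S e1) e1 p - pd3 (pd3 S e2) e2 p))
        + κ * (fderiv ℝ φ p e1 * ((S p ⨯₃ v p) ⬝ᵥ pd3 S e1 p)
            + fderiv ℝ φ p e2 * ((S p ⨯₃ v p) ⬝ᵥ pd3 S e2 p)) := by
    rw [hIp]
    rw [dotProduct_add]
    have : (S p ⨯₃ v p) ⬝ᵥ (S p ⨯₃ (pd3 (pd3 S e1) e1 p - pd3 (pd3 S e2) e2 p))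
        = v p ⬝ᵥ (pd3 (pd3 S e1) e1 p - pd3 (pd3 S e2) e2 p) := by
      rw [cross_dot_cross, hsp, dotProduct_comm (v p) (S p), hsVp]
      ring
    rw [this]
    simp [dotProduct_add, dotProduct_smul, smul_eq_mul]
    ring
  show ((v p ⬝ᵥ pd3 S et p : ℝ) : ℂ) + Complex.I * (((S p ⨯₃ v p) ⬝ᵥ pd3 S et p : ℝ) : ℂ) = _
  rw [hLv, hLw]
  unfold framePsi
  rw [dotProduct_sub, dotProduct_sub]
  push_cast
  linear_combination (-(((S p ⨯₃ v p) ⬝ᵥ pd3 (pd3 S e1) e1 p : ℝ) : ℂ)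
    + (((S p ⨯₃ v p) ⬝ᵥ pd3 (pd3 S e2) e2 p : ℝ) : ℂ)) * Complex.I_sq
end

section
/- Under the frame setup on ℝ_s × ℝ²_x, suppose S satisfies the harmonic map heat flow equation pointwise: ∂_s S = ∂₁² S + ∂₂² S + S ( |∂₁ S|² + |∂₂ S|² ). Then pointwise ψ_s = D₁ ψ₁ + D₂ ψ₂. -/
open Matrix

section Helpers

variable {P : Type*} [NormedAddCommGroup P] [NormedSpace ℝ P]

lemma frame_dot (a b : Fin 3 → ℝ) (ha : a ⬝ᵥ a = 1) (hb : b ⬝ᵥ b = 1) (hab : a ⬝ᵥ b = 0)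
    (x y : Fin 3 → ℝ) :
    x ⬝ᵥ y = (a ⬝ᵥ x) * (a ⬝ᵥ y) + (b ⬝ᵥ x) * (b ⬝ᵥ y)
      + ((a ⨯₃ b) ⬝ᵥ x) * ((a ⨯₃ b) ⬝ᵥ y) := by
  simp only [dotProduct, cross_apply, Fin.sum_univ_three, Matrix.cons_val_zero,
    Matrix.cons_val_one, Matrix.head_cons, Matrix.cons_val_two, Matrix.tail_cons] at ha hb hab ⊢
  linear_combination
    (-( (x 0*y 0 + x 1*y 1 + x 2*y 2) * (b 0*b 0 + b 1*b 1 + b 2*b 2)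
        - (b 0*x 0 + b 1*x 1 + b 2*x 2) * (b 0*y 0 + b 1*y 1 + b 2*y 2))) * ha
    + (-( (x 0*y 0 + x 1*y 1 + x 2*y 2)
        - (a 0*x 0 + a 1*x 1 + a 2*x 2) * (a 0*y 0 + a 1*y 1 + a 2*y 2))) * hb
    + (-( (a 0*x 0 + a 1*x 1 + a 2*x 2) * (b 0*y 0 + b 1*y 1 + b 2*y 2)
        + (b 0*x 0 + b 1*x 1 + b 2*x 2) * (a 0*y 0 + a 1*y 1 + a 2*y 2)
        - (x 0*y 0 + x 1*y 1 + x 2*y 2) * (a 0*b 0 + a 1*b 1 + a 2*b 2))) * hab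

lemma fderiv_comp_apply {f : P → Fin 3 → ℝ} {p : P} (hf : DifferentiableAt ℝ f p)
    (e : P) (i : Fin 3) :
    fderiv ℝ (fun q => f q i) p e = fderiv ℝ f p e i := by
  rw [(hasFDerivAt_pi'.1 hf.hasFDerivAt i).fderiv]; rfl

lemma diffAt_comp {f : P → Fin 3 → ℝ} {p : P} (hf : DifferentiableAt ℝ f p) (i : Fin 3) :
    DifferentiableAt ℝ (fun q => f q i) p := differentiableAt_pi.mp hf i

lemma differentiableAt_dot {f g : P → Fin 3 → ℝ} {p : P} (hf : DifferentiableAt ℝ f p)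
    (hg : DifferentiableAt ℝ g p) :
    DifferentiableAt ℝ (fun q => f q ⬝ᵥ g q) p := by
  have key : (fun q => f q ⬝ᵥ g q)
      = fun q => f q 0 * g q 0 + f q 1 * g q 1 + f q 2 * g q 2 := by
    funext q; simp [dotProduct, Fin.sum_univ_three]
  rw [key]
  exact (((diffAt_comp hf 0).mul (diffAt_comp hg 0)).add
    ((diffAt_comp hf 1).mul (diffAt_comp hg 1))).add
    ((diffAt_comp hf 2).mul (diffAt_comp hg 2))

lemma fderiv_dot {f g : P → Fin 3 → ℝ} {p : P} (hf : DifferentiableAt ℝ f p)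
    (hg : DifferentiableAt ℝ g p) (e : P) :
    fderiv ℝ (fun q => f q ⬝ᵥ g q) p e = fderiv ℝ f p e ⬝ᵥ g p + f p ⬝ᵥ fderiv ℝ g p e := by
  have key : (fun q => f q ⬝ᵥ g q)
      = fun q => f q 0 * g q 0 + f q 1 * g q 1 + f q 2 * g q 2 := by
    funext q; simp [dotProduct, Fin.sum_univ_three]
  have hm : ∀ i : Fin 3, fderiv ℝ (fun q => f q i * g q i) p e
      = fderiv ℝ f p e i * g p i + f p i * fderiv ℝ g p e i := by
    intro i
    rw [fderiv_fun_mul (diffAt_comp hf i) (diffAt_comp hg i)]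
    simp [fderiv_comp_apply hf e i, fderiv_comp_apply hg e i]
    ring
  rw [key, fderiv_fun_add (((diffAt_comp hf 0).fun_mul (diffAt_comp hg 0)).fun_add
      ((diffAt_comp hf 1).fun_mul (diffAt_comp hg 1))) ((diffAt_comp hf 2).fun_mul (diffAt_comp hg 2)),
    ContinuousLinearMap.add_apply,
    fderiv_fun_add ((diffAt_comp hf 0).fun_mul (diffAt_comp hg 0))
      ((diffAt_comp hf 1).fun_mul (diffAt_comp hg 1)), ContinuousLinearMap.add_apply,
    hm 0, hm 1, hm 2]
  simp [dotProduct, Fin.sum_univ_three]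
  ring

lemma differentiableAt_cross {f g : P → Fin 3 → ℝ} {p : P} (hf : DifferentiableAt ℝ f p)
    (hg : DifferentiableAt ℝ g p) :
    DifferentiableAt ℝ (fun q => f q ⨯₃ g q) p := by
  rw [show (fun q => f q ⨯₃ g q) = fun q (i : Fin 3) =>
      ![f q 1 * g q 2 - f q 2 * g q 1, f q 2 * g q 0 - f q 0 * g q 2,
        f q 0 * g q 1 - f q 1 * g q 0] i from funext fun q => cross_apply (f q) (g q)]
  apply differentiableAt_pi.mpr
  intro i
  fin_cases i <;> simp <;>
    exact ((diffAt_comp hf _).mul (diffAt_comp hg _)).sub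
      ((diffAt_comp hf _).mul (diffAt_comp hg _))

lemma fderiv_cross {f g : P → Fin 3 → ℝ} {p : P} (hf : DifferentiableAt ℝ f p)
    (hg : DifferentiableAt ℝ g p) (e : P) :
    fderiv ℝ (fun q => f q ⨯₃ g q) p e
      = fderiv ℝ f p e ⨯₃ g p + f p ⨯₃ fderiv ℝ g p e := by
  have hc := differentiableAt_cross hf hg
  have hm : ∀ a b c d : Fin 3, fderiv ℝ (fun q => f q a * g q b - f q c * g q d) p e
      = (fderiv ℝ f p e a * g p b + f p a * fderiv ℝ g p e b)
        - (fderiv ℝ f p e c * g p d + f p c * fderiv ℝ g p e d) := by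
    intro a b c d
    rw [fderiv_fun_sub ((diffAt_comp hf a).fun_mul (diffAt_comp hg b))
      ((diffAt_comp hf c).fun_mul (diffAt_comp hg d)), ContinuousLinearMap.sub_apply,
      fderiv_fun_mul (diffAt_comp hf a) (diffAt_comp hg b),
      fderiv_fun_mul (diffAt_comp hf c) (diffAt_comp hg d)]
    simp [fderiv_comp_apply hf, fderiv_comp_apply hg]
    ring
  have comp0 : (fun q => (f q ⨯₃ g q) 0) = fun q => f q 1 * g q 2 - f q 2 * g q 1 := by
    funext q; rw [cross_apply]; rfl
  have comp1 : (fun q => (f q ⨯₃ g q) 1) = fun q => f q 2 * g q 0 - f q 0 * g q 2 := by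
    funext q; rw [cross_apply]; rfl
  have comp2 : (fun q => (f q ⨯₃ g q) 2) = fun q => f q 0 * g q 1 - f q 1 * g q 0 := by
    funext q; rw [cross_apply]; rfl
  funext i
  fin_cases i
  · show fderiv ℝ (fun q => f q ⨯₃ g q) p e 0 = _
    rw [← fderiv_comp_apply hc e 0, comp0, hm]
    simp [cross_apply]; ring
  · show fderiv ℝ (fun q => f q ⨯₃ g q) p e 1 = _
    rw [← fderiv_comp_apply hc e 1, comp1, hm]
    simp [cross_apply]; ring
  · show fderiv ℝ (fun q => f q ⨯₃ g q) p e 2 = _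
    rw [← fderiv_comp_apply hc e 2, comp2, hm]
    simp [cross_apply]; ring

end Helpers

/-- The heat-time direction in `ℝ_s × ℝ²_x`. -/
def es : ℝ × ℝ × ℝ := (1, 0, 0)
/-- For a solution of the harmonic map heat flow
`∂_s S = ΔS + S(|∂₁S|² + |∂₂S|²)` one has `ψ_s = D₁ψ₁ + D₂ψ₂`. -/
theorem psi_s_identity_heat_flow
    (S v : ℝ × ℝ × ℝ → Fin 3 → ℝ)
    (hS : ContDiff ℝ 2 S) (hv : ContDiff ℝ 2 v)
    (hS1 : ∀ p, S p ⬝ᵥ S p = 1) (hv1 : ∀ p, v p ⬝ᵥ v p = 1)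
    (hSv : ∀ p, S p ⬝ᵥ v p = 0)
    (w : ℝ × ℝ × ℝ → Fin 3 → ℝ) (hw : ∀ p, w p = crossProduct (S p) (v p))
    (hHeat : ∀ p : ℝ × ℝ × ℝ,
      pd3 S es p =
        pd3 (pd3 S e1) e1 p + pd3 (pd3 S e2) e2 p +
          ((pd3 S e1 p ⬝ᵥ pd3 S e1 p) + (pd3 S e2 p ⬝ᵥ pd3 S e2 p)) • S p) :
    ∀ p : ℝ × ℝ × ℝ,
      framePsi S v w es p =
        Dcov (frameA v w e1) (framePsi S v w e1) e1 p
          + Dcov (frameA v w e2) (framePsi S v w e2) e2 p := by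
  have hw' : w = fun q => S q ⨯₃ v q := funext hw
  subst hw'
  intro p
  have dS : DifferentiableAt ℝ S p := (hS.differentiable (by norm_num)) p
  have dv : DifferentiableAt ℝ v p := (hv.differentiable (by norm_num)) p
  have dw : DifferentiableAt ℝ (fun q => S q ⨯₃ v q) p := differentiableAt_cross dS dv
  have dpdS : ∀ e : ℝ × ℝ × ℝ, DifferentiableAt ℝ (fun q => fderiv ℝ S q e) p := fun e =>
    (((hS.fderiv_right (m := 1) (by norm_num)).clm_apply contDiff_const).differentiable one_ne_zero) p
  -- derivative orthogonality facts
  have hSdS : ∀ e : ℝ × ℝ × ℝ, S p ⬝ᵥ fderiv ℝ S p e = 0 := by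
    intro e
    have h0 : fderiv ℝ (fun q => S q ⬝ᵥ S q) p e = 0 := by
      rw [show (fun q => S q ⬝ᵥ S q) = fun _ => (1:ℝ) from funext hS1]
      simp
    rw [fderiv_dot dS dS e, dotProduct_comm] at h0
    linarith
  have hvdv : ∀ e : ℝ × ℝ × ℝ, v p ⬝ᵥ fderiv ℝ v p e = 0 := by
    intro e
    have h0 : fderiv ℝ (fun q => v q ⬝ᵥ v q) p e = 0 := by
      rw [show (fun q => v q ⬝ᵥ v q) = fun _ => (1:ℝ) from funext hv1]
      simp
    rw [fderiv_dot dv dv e, dotProduct_comm] at h0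
    linarith
  have hSdv : ∀ e : ℝ × ℝ × ℝ, S p ⬝ᵥ fderiv ℝ v p e = -(v p ⬝ᵥ fderiv ℝ S p e) := by
    intro e
    have h0 : fderiv ℝ (fun q => S q ⬝ᵥ v q) p e = 0 := by
      rw [show (fun q => S q ⬝ᵥ v q) = fun _ => (0:ℝ) from funext hSv]
      simp
    rw [fderiv_dot dS dv e, dotProduct_comm] at h0
    linarith
  have hvS : v p ⬝ᵥ S p = 0 := by rw [dotProduct_comm]; exact hSv p
  have hwS : (S p ⨯₃ v p) ⬝ᵥ S p = 0 := by
    rw [dotProduct_comm]; exact dot_self_cross _ _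
  -- key per-direction computation
  have key : ∀ e : ℝ × ℝ × ℝ,
      fderiv ℝ (fun q => ((v q ⬝ᵥ fderiv ℝ S q e : ℝ) : ℂ)
          + Complex.I * (((S q ⨯₃ v q) ⬝ᵥ fderiv ℝ S q e : ℝ) : ℂ)) p e
        = ((v p ⬝ᵥ fderiv ℝ (fun q => fderiv ℝ S q e) p e : ℝ) : ℂ)
          + Complex.I * (((S p ⨯₃ v p) ⬝ᵥ fderiv ℝ (fun q => fderiv ℝ S q e) p e : ℝ) : ℂ)
          + (((S p ⨯₃ v p) ⬝ᵥ fderiv ℝ v p e : ℝ) : ℂ)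
              * (((S p ⨯₃ v p) ⬝ᵥ fderiv ℝ S p e : ℝ) : ℂ)
          - Complex.I * (((S p ⨯₃ v p) ⬝ᵥ fderiv ℝ v p e : ℝ) : ℂ)
              * ((v p ⬝ᵥ fderiv ℝ S p e : ℝ) : ℂ) := by
    intro e
    have hu : DifferentiableAt ℝ (fun q => v q ⬝ᵥ fderiv ℝ S q e) p :=
      differentiableAt_dot dv (dpdS e)
    have hz : DifferentiableAt ℝ (fun q => (S q ⨯₃ v q) ⬝ᵥ fderiv ℝ S q e) p :=
      differentiableAt_dot dw (dpdS e)
    have Hu : HasFDerivAt (fun q => ((v q ⬝ᵥ fderiv ℝ S q e : ℝ) : ℂ))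
        (Complex.ofRealCLM.comp (fderiv ℝ (fun q => v q ⬝ᵥ fderiv ℝ S q e) p)) p :=
      Complex.ofRealCLM.hasFDerivAt.comp p hu.hasFDerivAt
    have Hz : HasFDerivAt (fun q => Complex.I * (((S q ⨯₃ v q) ⬝ᵥ fderiv ℝ S q e : ℝ) : ℂ))
        (Complex.I • (Complex.ofRealCLM.comp
          (fderiv ℝ (fun q => (S q ⨯₃ v q) ⬝ᵥ fderiv ℝ S q e) p))) p :=
      (Complex.ofRealCLM.hasFDerivAt.comp p hz.hasFDerivAt).const_mul Complex.I
    have Htot := Hu.fun_add Hz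
    rw [Htot.fderiv]
    have du : fderiv ℝ (fun q => v q ⬝ᵥ fderiv ℝ S q e) p e
        = fderiv ℝ v p e ⬝ᵥ fderiv ℝ S p e
          + v p ⬝ᵥ fderiv ℝ (fun q => fderiv ℝ S q e) p e :=
      fderiv_dot dv (dpdS e) e
    have dz : fderiv ℝ (fun q => (S q ⨯₃ v q) ⬝ᵥ fderiv ℝ S q e) p e
        = fderiv ℝ (fun q => S q ⨯₃ v q) p e ⬝ᵥ fderiv ℝ S p e
          + (S p ⨯₃ v p) ⬝ᵥ fderiv ℝ (fun q => fderiv ℝ S q e) p e :=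
      fderiv_dot dw (dpdS e) e
    have hcross : fderiv ℝ (fun q => S q ⨯₃ v q) p e
        = fderiv ℝ S p e ⨯₃ v p + S p ⨯₃ fderiv ℝ v p e := fderiv_cross dS dv e
    -- scalar identity 1 : dv ⬝ dS
    have h1 : fderiv ℝ v p e ⬝ᵥ fderiv ℝ S p e
        = ((S p ⨯₃ v p) ⬝ᵥ fderiv ℝ v p e) * ((S p ⨯₃ v p) ⬝ᵥ fderiv ℝ S p e) := by
      rw [frame_dot (S p) (v p) (hS1 p) (hv1 p) (hSv p) (fderiv ℝ v p e) (fderiv ℝ S p e),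
        hSdS e, hvdv e]
      ring
    -- scalar identity 2 : dw ⬝ dS
    have t1 : (fderiv ℝ S p e ⨯₃ v p) ⬝ᵥ fderiv ℝ S p e = 0 := by
      rw [dotProduct_comm]; exact dot_self_cross _ _
    have t2 : v p ⬝ᵥ (S p ⨯₃ fderiv ℝ v p e) = -((S p ⨯₃ v p) ⬝ᵥ fderiv ℝ v p e) := by
      rw [triple_product_permutation, triple_product_permutation,
        ← cross_anticomm (S p) (v p), dotProduct_neg, dotProduct_comm]
    have t3 : (S p ⨯₃ v p) ⬝ᵥ (S p ⨯₃ fderiv ℝ v p e) = 0 := by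
      rw [cross_dot_cross, hS1 p, hvdv e, hvS]; ring
    have t4 : S p ⬝ᵥ (S p ⨯₃ fderiv ℝ v p e) = 0 := dot_self_cross _ _
    have h2 : (S p ⨯₃ fderiv ℝ v p e) ⬝ᵥ fderiv ℝ S p e
        = -(((S p ⨯₃ v p) ⬝ᵥ fderiv ℝ v p e) * (v p ⬝ᵥ fderiv ℝ S p e)) := by
      rw [frame_dot (S p) (v p) (hS1 p) (hv1 p) (hSv p)
        (S p ⨯₃ fderiv ℝ v p e) (fderiv ℝ S p e), t4, t2, t3, hSdS e]
      ring
    rw [ContinuousLinearMap.add_apply, ContinuousLinearMap.smul_apply,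
      ContinuousLinearMap.comp_apply, ContinuousLinearMap.comp_apply, du, dz, hcross,
      add_dotProduct, t1, h1, h2]
    simp only [Complex.ofRealCLM_apply, smul_eq_mul]
    push_cast
    ring
  -- assemble
  have hH := hHeat p
  simp only [pd3] at hH
  have hinner1 : pd3 S e1 = fun q => fderiv ℝ S q e1 := rfl
  have hinner2 : pd3 S e2 = fun q => fderiv ℝ S q e2 := rfl
  rw [hinner1, hinner2] at hH
  have hL : ∀ u : Fin 3 → ℝ, u ⬝ᵥ S p = 0 →
      u ⬝ᵥ fderiv ℝ S p es
        = u ⬝ᵥ fderiv ℝ (fun q => fderiv ℝ S q e1) p e1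
          + u ⬝ᵥ fderiv ℝ (fun q => fderiv ℝ S q e2) p e2 := by
    intro u hu
    rw [hH, dotProduct_add, dotProduct_add, dotProduct_smul, hu, smul_zero]
    ring
  have hfp : ∀ e : ℝ × ℝ × ℝ, framePsi S v (fun q => S q ⨯₃ v q) e
      = fun q => ((v q ⬝ᵥ fderiv ℝ S q e : ℝ) : ℂ)
          + Complex.I * (((S q ⨯₃ v q) ⬝ᵥ fderiv ℝ S q e : ℝ) : ℂ) := fun e => rfl
  simp only [framePsi, Dcov, frameA, pd3]
  rw [hfp e1, hfp e2, key e1, key e2, hL (v p) hvS, hL (S p ⨯₃ v p) hwS]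
  push_cast
  ring_nf
  rw [Complex.I_sq]
  ring
end
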